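/- Let L ≥ 2, d_0 ≥ 1, d_L ≥ 1, and 1 ≤ r ≤ min{d_0, d_L}. Let U₁ ∈ ℝ^{d_L×r} and V₁ ∈ ℝ^{d_0×r} have orthonormal columns, let λ₁, …, λ_r > 0, and for l ∈ {1,…,L} set Λ_U^{(l)} = diag(λ₁^{2(L−l)}, …, λ_r^{2(L−l)}) and Λ_V^{(l)} = diag(λ₁^{2(l−1)}, …, λ_r^{2(l−1)}). Define G = U₁Λ_U^{(1)}U₁ᵀ ⊗ I_{d_0} + I_{d_L} ⊗ V₁Λ_V^{(L)}V₁ᵀ + Σ_{l=2}^{L−1} U₁Λ_U^{(l)}U₁ᵀ ⊗ V₁Λ_V^{(l)}V₁ᵀ. Then the multiset of eigenvalues of G (with multiplicity) consists of: ν_{i,j} := Σ_{l=1}^{L} λ_i^{2(L−l)} λ_j^{2(l−1)} for each pair 1 ≤ i, j ≤ r; the value λ_i^{2(L−1)} with multiplicity d_0 − r for each 1 ≤ i ≤ r; the value λ_j^{2(L−1)} with multiplicity d_L − r for each 1 ≤ j ≤ r; and 0 with multiplicity (d_L − r)(d_0 − r). In particular G has exactly (d_0 + d_L − r)r nonzero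 eigenvalues. -/

import Mathlib

open Matrix Polynomial
open scoped Kronecker

lemma my_charpoly_conj {n : Type*} [Fintype n] [DecidableEq n]
    {R : Type*} [CommRing R] (P Q A : Matrix n n R)
    (h1 : P * Q = 1) (A' : Matrix n n R) (hA' : A' = P * A * Q) :
    A'.charpoly = A.charpoly := by
  have hm : ∀ M N : Matrix n n R, (M * N).map (C : R →+* R[X]) = M.map C * N.map C := fun M N =>
    Matrix.map_mul
  have hmap1 : P.map (C : R →+* R[X]) * Q.map (C : R →+* R[X]) = 1 := by
    rw [← hm, h1]
    simp
  have key : charmatrix A' = P.map C * charmatrix A * Q.map C := by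
    rw [hA']
    show Matrix.scalar n (X : R[X]) - _ = _
    rw [charmatrix]
    rw [mul_sub, sub_mul]
    congr 1
    · rw [mul_assoc, (Matrix.scalar_commute (X : R[X]) (Commute.all X) _).eq, ← mul_assoc, hmap1,
        one_mul]
    · simp only [RingHom.mapMatrix_apply]
      rw [hm, hm]
  rw [Matrix.charpoly, Matrix.charpoly, key, Matrix.det_mul, Matrix.det_mul,
    mul_comm, ← mul_assoc, ← Matrix.det_mul, mul_eq_one_comm.mp hmap1]
  simp

lemma my_charpoly_diagonal {n : Type*} [Fintype n] [DecidableEq n]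
    {R : Type*} [CommRing R] (d : n → R) :
    (Matrix.diagonal d).charpoly = ∏ i, (X - C (d i)) := by
  rw [Matrix.charpoly]
  have : charmatrix (Matrix.diagonal d) = Matrix.diagonal fun i => (X : R[X]) - C (d i) := by
    ext i j
    by_cases h : i = j
    · subst h; simp
    · simp [h, Matrix.diagonal_apply_ne _ h]
  rw [this, Matrix.det_diagonal]

lemma my_roots_charpoly_diagonal {n : Type*} [Fintype n] [DecidableEq n]
    (d : n → ℝ) :
    (Matrix.diagonal d).charpoly.roots = Finset.univ.val.map d := by
  rw [my_charpoly_diagonal]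
  have : ∏ i, ((X : ℝ[X]) - C (d i)) = ((Finset.univ.val.map d).map fun a => X - C a).prod := by
    rw [Multiset.map_map]
    rfl
  rw [this, Polynomial.roots_multiset_prod_X_sub_C]

lemma my_eigenvalues_multiset {n : Type*} [Fintype n] [DecidableEq n]
    {A : Matrix n n ℝ} (hA : A.IsHermitian) (P : Matrix n n ℝ) (d : n → ℝ)
    (hP : P * Pᵀ = 1) (hAPD : A = P * Matrix.diagonal d * Pᵀ) :
    Finset.univ.val.map hA.eigenvalues = Finset.univ.val.map d := by
  have h1 : A.charpoly = (Matrix.diagonal d).charpoly :=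
    my_charpoly_conj P Pᵀ _ hP _ hAPD
  have h2 : A.charpoly = (Matrix.diagonal hA.eigenvalues).charpoly := by
    refine my_charpoly_conj (hA.eigenvectorUnitary : Matrix n n ℝ)
      (star (hA.eigenvectorUnitary : Matrix n n ℝ)) _ ?_ _ ?_
    · exact Matrix.mem_unitaryGroup_iff.mp (hA.eigenvectorUnitary).2
    · have h := hA.spectral_theorem
      rwa [RCLike.ofReal_real_eq_id, Function.id_comp] at h
  calc Finset.univ.val.map hA.eigenvalues
      = (Matrix.diagonal hA.eigenvalues).charpoly.roots := (my_roots_charpoly_diagonal _).symm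
    _ = A.charpoly.roots := by rw [h2]
    _ = (Matrix.diagonal d).charpoly.roots := by rw [h1]
    _ = Finset.univ.val.map d := my_roots_charpoly_diagonal _

lemma my_orthogonal_extension {d r : ℕ} (hrd : r ≤ d) (U : Matrix (Fin d) (Fin r) ℝ)
    (hU : Uᵀ * U = 1) :
    ∃ P : Matrix (Fin d) (Fin d) ℝ, Pᵀ * P = 1 ∧ P * Pᵀ = 1 ∧
      ∀ (i : Fin d) (k : Fin r), P i (Fin.castLE hrd k) = U i k := by
  classical
  let u : Fin d → Fin d → ℝ := fun k i => if h : (k : ℕ) < r then U i ⟨(k : ℕ), h⟩ else 0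
  let v : Fin d → EuclideanSpace ℝ (Fin d) := fun k => (WithLp.equiv 2 (Fin d → ℝ)).symm (u k)
  have hinner : ∀ a b : Fin d, inner ℝ (v a) (v b) = ∑ i, u a i * u b i := by
    intro a b
    simp [v, PiLp.inner_apply, WithLp.equiv_symm_apply, mul_comm]
  have hv : Orthonormal ℝ (Set.restrict {k : Fin d | (k : ℕ) < r} v) := by
    rw [orthonormal_iff_ite]
    rintro ⟨a, ha⟩ ⟨b, hb⟩
    show inner ℝ (v a) (v b) = _
    rw [hinner]
    have key : ∑ i, u a i * u b i = (Uᵀ * U) ⟨(a : ℕ), ha⟩ ⟨(b : ℕ), hb⟩ := by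
      rw [Matrix.mul_apply]
      refine Finset.sum_congr rfl fun i _ => ?_
      simp only [u, Matrix.transpose_apply]
      rw [dif_pos (show (a : ℕ) < r from ha), dif_pos (show (b : ℕ) < r from hb)]
    rw [key, hU, Matrix.one_apply]
    simp [Subtype.ext_iff, Fin.ext_iff]
  obtain ⟨b, hb⟩ := hv.exists_orthonormalBasis_extension_of_card_eq (by simp)
  refine ⟨Matrix.of fun i k => b k i, ?_, ?_, ?_⟩
  · ext a c
    have horth := orthonormal_iff_ite.mp b.orthonormal a c
    rw [PiLp.inner_apply] at horth
    simp only [RCLike.inner_apply, starRingEnd_apply, star_trivial] at horth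
    rw [Matrix.mul_apply, Matrix.one_apply]
    simpa [mul_comm] using horth
  · refine mul_eq_one_comm.mp ?_
    ext a c
    have horth := orthonormal_iff_ite.mp b.orthonormal a c
    rw [PiLp.inner_apply] at horth
    simp only [RCLike.inner_apply, starRingEnd_apply, star_trivial] at horth
    rw [Matrix.mul_apply, Matrix.one_apply]
    simpa [mul_comm] using horth
  · intro i k
    have hmem : (Fin.castLE hrd k : Fin d) ∈ {k : Fin d | (k : ℕ) < r} := k.isLt
    have heq := hb _ hmem
    simp only [Matrix.of_apply]
    rw [heq]
    have hlt : ((Fin.castLE hrd k : Fin d) : ℕ) < r := k.isLt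
    simp [v, u, WithLp.equiv_symm_apply, dif_pos hlt]

lemma my_filter_lt (d r : ℕ) (hrd : r ≤ d) :
    Finset.univ.filter (fun k : Fin d => (k : ℕ) < r) = Finset.univ.map (Fin.castLEEmb hrd) := by
  ext x
  simp only [Finset.mem_filter, Finset.mem_map, Finset.mem_univ, true_and]
  constructor
  · intro h; exact ⟨⟨(x : ℕ), h⟩, by ext; rfl⟩
  · rintro ⟨a, -, rfl⟩; exact a.isLt

lemma my_conj_diag {d r : ℕ} (hrd : r ≤ d) (U : Matrix (Fin d) (Fin r) ℝ)
    (P : Matrix (Fin d) (Fin d) ℝ)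
    (hcol : ∀ (i : Fin d) (k : Fin r), P i (Fin.castLE hrd k) = U i k)
    (μ : Fin r → ℝ) :
    P * Matrix.diagonal (fun k : Fin d => if h : (k : ℕ) < r then μ ⟨(k : ℕ), h⟩ else 0) * Pᵀ
      = U * Matrix.diagonal μ * Uᵀ := by
  ext i j
  rw [Matrix.mul_apply, Matrix.mul_apply]
  simp only [Matrix.mul_diagonal, Matrix.transpose_apply]
  rw [← Finset.sum_subset (Finset.subset_univ (Finset.univ.map (Fin.castLEEmb hrd)))
    (fun x _ hx => ?_)]
  · rw [Finset.sum_map]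
    refine Finset.sum_congr rfl fun a _ => ?_
    have h1 : ((Fin.castLEEmb hrd a : Fin d) : ℕ) < r := a.isLt
    rw [dif_pos h1]
    have h2 : (⟨((Fin.castLEEmb hrd a : Fin d) : ℕ), h1⟩ : Fin r) = a := by ext; rfl
    rw [h2]
    rw [show (Fin.castLEEmb hrd a : Fin d) = Fin.castLE hrd a from rfl, hcol, hcol]
  · have hxr : ¬ ((x : ℕ) < r) := by
      intro hc
      exact hx (by rw [← my_filter_lt d r hrd]; simp [hc])
    rw [dif_neg hxr, mul_zero, zero_mul]

lemma my_bind_const {α β : Type*} (s : Multiset α) (m : Multiset β) :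
    s.bind (fun _ => m) = Multiset.card s • m := by
  induction s using Multiset.induction with
  | empty => simp
  | cons a s ih =>
    simp only [Multiset.cons_bind, ih, Multiset.card_cons]
    rw [add_smul, one_smul, add_comm]

lemma my_bind_replicate {α β : Type*} (n : ℕ) (f : α → β) (s : Multiset α) :
    s.bind (fun a => Multiset.replicate n (f a)) = n • s.map f := by
  induction s using Multiset.induction with
  | empty => simp
  | cons a s ih =>
    simp only [Multiset.cons_bind, ih, Multiset.map_cons]
    rw [← Multiset.singleton_add, smul_add, Multiset.nsmul_singleton]

lemma my_univ_prod_map {α β γ : Type*} [Fintype α] [Fintype β] (f : α × β → γ) :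
    (Finset.univ : Finset (α × β)).val.map f
      = (Finset.univ : Finset α).val.bind
          fun a => (Finset.univ : Finset β).val.map fun b => f (a, b) := by
  rw [← Finset.univ_product_univ, Finset.product_val,
    show ((Finset.univ : Finset α).val ×ˢ (Finset.univ : Finset β).val)
      = (Finset.univ : Finset α).val.bind
          (fun a => (Finset.univ : Finset β).val.map (Prod.mk a)) from rfl,
    Multiset.map_bind]
  simp [Multiset.map_map, Function.comp]

/-- The Gram matrix
`G = U₁Λ_U⁽¹⁾U₁ᵀ ⊗ I_{d₀} + I_{d_L} ⊗ V₁Λ_V⁽ᴸ⁾V₁ᵀ + Σ_{l=2}^{L−1} U₁Λ_U⁽ˡ⁾U₁ᵀ ⊗ V₁Λ_V⁽ˡ⁾V₁ᵀ`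
(where `Λ_U⁽ˡ⁾ = diag(λᵢ^{2(L−l)})`, `Λ_V⁽ˡ⁾ = diag(λᵢ^{2(l−1)})`) has eigenvalue multiset
consisting of `ν_{i,j} = Σ_{l=1}^{L} λᵢ^{2(L−l)} λⱼ^{2(l−1)}` for `1 ≤ i, j ≤ r`, the value
`λᵢ^{2(L−1)}` with multiplicity `d₀ − r` for each `i ≤ r` and multiplicity `d_L − r` for each
`j ≤ r`, and `0` with multiplicity `(d_L − r)(d₀ − r)`; in particular it has exactly
`(d₀ + d_L − r)r` nonzero eigenvalues. -/
theorem statement2 (L d0 dL r : ℕ) (hL : 2 ≤ L) (hd0 : 1 ≤ d0) (hdL : 1 ≤ dL)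
    (hr1 : 1 ≤ r) (hr : r ≤ min d0 dL)
    (U1 : Matrix (Fin dL) (Fin r) ℝ) (V1 : Matrix (Fin d0) (Fin r) ℝ)
    (hU1 : U1ᵀ * U1 = 1) (hV1 : V1ᵀ * V1 = 1)
    (lam : Fin r → ℝ) (hlam : ∀ i, 0 < lam i)
    (G : Matrix (Fin dL × Fin d0) (Fin dL × Fin d0) ℝ)
    (hGdef : G =
      (U1 * Matrix.diagonal (fun i => lam i ^ (2 * (L - 1))) * U1ᵀ) ⊗ₖ
          (1 : Matrix (Fin d0) (Fin d0) ℝ) +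
        (1 : Matrix (Fin dL) (Fin dL) ℝ) ⊗ₖ
          (V1 * Matrix.diagonal (fun i => lam i ^ (2 * (L - 1))) * V1ᵀ) +
        ∑ l ∈ Finset.Icc 2 (L - 1),
          (U1 * Matrix.diagonal (fun i => lam i ^ (2 * (L - l))) * U1ᵀ) ⊗ₖ
            (V1 * Matrix.diagonal (fun i => lam i ^ (2 * (l - 1))) * V1ᵀ))
    (hG : G.IsHermitian) :
    Finset.univ.val.map hG.eigenvalues =
        (Finset.univ.val.map fun p : Fin r × Fin r =>
          ∑ l ∈ Finset.Icc 1 L, lam p.1 ^ (2 * (L - l)) * lam p.2 ^ (2 * (l - 1))) +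
        (Finset.univ.val.bind fun i : Fin r =>
          Multiset.replicate (d0 - r) (lam i ^ (2 * (L - 1)))) +
        (Finset.univ.val.bind fun j : Fin r =>
          Multiset.replicate (dL - r) (lam j ^ (2 * (L - 1)))) +
        Multiset.replicate ((dL - r) * (d0 - r)) (0 : ℝ) ∧
    ((Finset.univ.val.map hG.eigenvalues).filter fun x => x ≠ 0).card =
        (d0 + dL - r) * r := by
  have hrd0 : r ≤ d0 := le_trans hr (min_le_left _ _)
  have hrdL : r ≤ dL := le_trans hr (min_le_right _ _)
  obtain ⟨P, hPtP, hPPt, hPcol⟩ := my_orthogonal_extension hrdL U1 hU1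
  obtain ⟨Q, hQtQ, hQQt, hQcol⟩ := my_orthogonal_extension hrd0 V1 hV1
  -- the diagonal entries
  set eU : ℕ → Fin dL → ℝ :=
    fun l k => if h : (k : ℕ) < r then lam ⟨(k : ℕ), h⟩ ^ (2 * (L - l)) else 0 with heU
  set eV : ℕ → Fin d0 → ℝ :=
    fun l k => if h : (k : ℕ) < r then lam ⟨(k : ℕ), h⟩ ^ (2 * (l - 1)) else 0 with heV
  set dd : Fin dL × Fin d0 → ℝ :=
    fun p => eU 1 p.1 + eV L p.2 + ∑ l ∈ Finset.Icc 2 (L - 1), eU l p.1 * eV l p.2 with hdd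
  -- the conjugation identity
  have hD : Matrix.diagonal (eU 1) ⊗ₖ (1 : Matrix (Fin d0) (Fin d0) ℝ)
      + (1 : Matrix (Fin dL) (Fin dL) ℝ) ⊗ₖ Matrix.diagonal (eV L)
      + ∑ l ∈ Finset.Icc 2 (L - 1), Matrix.diagonal (eU l) ⊗ₖ Matrix.diagonal (eV l)
      = Matrix.diagonal dd := by
    ext ⟨i1, i2⟩ ⟨j1, j2⟩
    by_cases h1 : i1 = j1 <;> by_cases h2 : i2 = j2
    · subst h1; subst h2
      simp [Matrix.add_apply, Matrix.sum_apply, Matrix.kroneckerMap_apply, Matrix.one_apply,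
        Matrix.diagonal_apply, hdd]
    · simp [Matrix.add_apply, Matrix.sum_apply, Matrix.kroneckerMap_apply, Matrix.one_apply,
        Matrix.diagonal_apply, h1, h2, Prod.ext_iff]
    · simp [Matrix.add_apply, Matrix.sum_apply, Matrix.kroneckerMap_apply, Matrix.one_apply,
        Matrix.diagonal_apply, h1, h2, Prod.ext_iff]
    · simp [Matrix.add_apply, Matrix.sum_apply, Matrix.kroneckerMap_apply, Matrix.one_apply,
        Matrix.diagonal_apply, h1, h2, Prod.ext_iff]
  have hPUdiag : ∀ m : ℕ,
      (P * Matrix.diagonal fun k : Fin dL =>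
        if h : (k : ℕ) < r then lam ⟨(k : ℕ), h⟩ ^ m else 0) * Pᵀ
      = U1 * Matrix.diagonal (fun i => lam i ^ m) * U1ᵀ :=
    fun m => my_conj_diag hrdL U1 P hPcol (fun i => lam i ^ m)
  have hQVdiag : ∀ m : ℕ,
      (Q * Matrix.diagonal fun k : Fin d0 =>
        if h : (k : ℕ) < r then lam ⟨(k : ℕ), h⟩ ^ m else 0) * Qᵀ
      = V1 * Matrix.diagonal (fun i => lam i ^ m) * V1ᵀ :=
    fun m => my_conj_diag hrd0 V1 Q hQcol (fun i => lam i ^ m)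
  have hGconj : G = (P ⊗ₖ Q) * Matrix.diagonal dd * (P ⊗ₖ Q)ᵀ := by
    rw [hGdef, ← Matrix.kroneckerMap_transpose, ← hD]
    rw [Matrix.mul_add, Matrix.mul_add, Matrix.add_mul, Matrix.add_mul, Finset.mul_sum,
      Finset.sum_mul]
    congr 1
    · congr 1
      · rw [← Matrix.mul_kronecker_mul, ← Matrix.mul_kronecker_mul, Matrix.mul_one, hQQt]
        simp only [heU]
        rw [hPUdiag (2 * (L - 1))]
      · rw [← Matrix.mul_kronecker_mul, ← Matrix.mul_kronecker_mul, Matrix.mul_one, hPPt]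
        simp only [heV]
        rw [hQVdiag (2 * (L - 1))]
    · refine Finset.sum_congr rfl fun l _ => ?_
      rw [← Matrix.mul_kronecker_mul, ← Matrix.mul_kronecker_mul]
      simp only [heU, heV]
      rw [hPUdiag (2 * (L - l)), hQVdiag (2 * (l - 1))]
  have hPQ : (P ⊗ₖ Q) * (P ⊗ₖ Q)ᵀ = 1 := by
    rw [← Matrix.kroneckerMap_transpose, ← Matrix.mul_kronecker_mul, hPPt, hQQt,
      Matrix.one_kronecker_one]
  have hEig : Finset.univ.val.map hG.eigenvalues = Finset.univ.val.map dd :=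
    my_eigenvalues_multiset hG (P ⊗ₖ Q) dd hPQ hGconj
  -- multiset splitting
  have hsplitL : (Finset.univ : Finset (Fin dL)).val
      = (Finset.univ : Finset (Fin r)).val.map (Fin.castLE hrdL)
        + Multiset.filter (fun k : Fin dL => ¬ (k : ℕ) < r) (Finset.univ : Finset (Fin dL)).val := by
    conv_lhs => rw [← Multiset.filter_add_not (fun k : Fin dL => (k : ℕ) < r) Finset.univ.val]
    congr 1
    rw [← Finset.filter_val, my_filter_lt dL r hrdL, Finset.map_val]
    rfl
  have hsplit0 : (Finset.univ : Finset (Fin d0)).val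
      = (Finset.univ : Finset (Fin r)).val.map (Fin.castLE hrd0)
        + Multiset.filter (fun k : Fin d0 => ¬ (k : ℕ) < r) (Finset.univ : Finset (Fin d0)).val := by
    conv_lhs => rw [← Multiset.filter_add_not (fun k : Fin d0 => (k : ℕ) < r) Finset.univ.val]
    congr 1
    rw [← Finset.filter_val, my_filter_lt d0 r hrd0, Finset.map_val]
    rfl
  set sB := Multiset.filter (fun k : Fin dL => ¬ (k : ℕ) < r) (Finset.univ : Finset (Fin dL)).val
    with hsB
  set tB := Multiset.filter (fun k : Fin d0 => ¬ (k : ℕ) < r) (Finset.univ : Finset (Fin d0)).val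
    with htB
  have hcard_sB : Multiset.card sB = dL - r := by
    have h := congrArg Multiset.card hsplitL
    simp only [Multiset.card_add, Multiset.card_map, Finset.card_val, Finset.card_univ,
      Fintype.card_fin] at h
    omega
  have hcard_tB : Multiset.card tB = d0 - r := by
    have h := congrArg Multiset.card hsplit0
    simp only [Multiset.card_add, Multiset.card_map, Finset.card_val, Finset.card_univ,
      Fintype.card_fin] at h
    omega
  -- pointwise values of dd
  have hltL : ∀ i : Fin r, ((Fin.castLE hrdL i : Fin dL) : ℕ) < r := fun i => i.isLt
  have hlt0 : ∀ i : Fin r, ((Fin.castLE hrd0 i : Fin d0) : ℕ) < r := fun i => i.isLt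
  have heUval : ∀ (l : ℕ) (i : Fin r), eU l (Fin.castLE hrdL i) = lam i ^ (2 * (L - l)) := by
    intro l i
    simp only [heU]
    rw [dif_pos (hltL i)]
    rfl
  have heVval : ∀ (l : ℕ) (j : Fin r), eV l (Fin.castLE hrd0 j) = lam j ^ (2 * (l - 1)) := by
    intro l j
    simp only [heV]
    rw [dif_pos (hlt0 j)]
    rfl
  have heUzero : ∀ (l : ℕ) (k : Fin dL), ¬ ((k : ℕ) < r) → eU l k = 0 := by
    intro l k hk; simp only [heU]; rw [dif_neg hk]
  have heVzero : ∀ (l : ℕ) (k : Fin d0), ¬ ((k : ℕ) < r) → eV l k = 0 := by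
    intro l k hk; simp only [heV]; rw [dif_neg hk]
  have hIcc : Finset.Icc 1 L = insert 1 (insert L (Finset.Icc 2 (L - 1))) := by
    ext x; simp only [Finset.mem_Icc, Finset.mem_insert]; omega
  have hval_AA : ∀ i j : Fin r, dd (Fin.castLE hrdL i, Fin.castLE hrd0 j)
      = ∑ l ∈ Finset.Icc 1 L, lam i ^ (2 * (L - l)) * lam j ^ (2 * (l - 1)) := by
    intro i j
    have h1 : dd (Fin.castLE hrdL i, Fin.castLE hrd0 j)
        = lam i ^ (2 * (L - 1)) + lam j ^ (2 * (L - 1))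
          + ∑ l ∈ Finset.Icc 2 (L - 1), lam i ^ (2 * (L - l)) * lam j ^ (2 * (l - 1)) := by
      simp only [hdd]
      rw [heUval, heVval]
      congr 1
      exact Finset.sum_congr rfl fun l _ => by rw [heUval, heVval]
    rw [h1, hIcc, Finset.sum_insert (by simp only [Finset.mem_insert, Finset.mem_Icc]; omega),
      Finset.sum_insert (by simp only [Finset.mem_Icc]; omega)]
    have e1 : 2 * (1 - 1) = 0 := rfl
    have e2 : 2 * (L - L) = 0 := by omega
    rw [e1, e2, pow_zero, pow_zero]
    ring
  have hval_AB : ∀ (i : Fin r) (j : Fin d0), ¬ ((j : ℕ) < r) →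
      dd (Fin.castLE hrdL i, j) = lam i ^ (2 * (L - 1)) := by
    intro i j hj
    simp only [hdd]
    rw [heUval, heVzero _ _ hj]
    rw [Finset.sum_congr rfl fun l _ => by rw [heVzero _ _ hj, mul_zero]]
    simp
  have hval_BA : ∀ (i : Fin dL) (j : Fin r), ¬ ((i : ℕ) < r) →
      dd (i, Fin.castLE hrd0 j) = lam j ^ (2 * (L - 1)) := by
    intro i j hi
    simp only [hdd]
    rw [heVval, heUzero _ _ hi]
    rw [Finset.sum_congr rfl fun l _ => by rw [heUzero _ _ hi, zero_mul]]
    simp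
  have hval_BB : ∀ (i : Fin dL) (j : Fin d0), ¬ ((i : ℕ) < r) → ¬ ((j : ℕ) < r) →
      dd (i, j) = 0 := by
    intro i j hi hj
    simp only [hdd]
    rw [heUzero _ _ hi, heVzero _ _ hj]
    rw [Finset.sum_congr rfl fun l _ => by rw [heUzero _ _ hi, zero_mul]]
    simp
  -- the multiset identity for dd
  have hmain : Finset.univ.val.map dd =
      (Finset.univ.val.map fun p : Fin r × Fin r =>
          ∑ l ∈ Finset.Icc 1 L, lam p.1 ^ (2 * (L - l)) * lam p.2 ^ (2 * (l - 1))) +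
        (Finset.univ.val.bind fun i : Fin r =>
          Multiset.replicate (d0 - r) (lam i ^ (2 * (L - 1)))) +
        (Finset.univ.val.bind fun j : Fin r =>
          Multiset.replicate (dL - r) (lam j ^ (2 * (L - 1)))) +
        Multiset.replicate ((dL - r) * (d0 - r)) (0 : ℝ) := by
    rw [my_univ_prod_map dd, hsplitL, Multiset.add_bind]
    conv_lhs => rw [hsplit0]
    simp only [Multiset.map_add, Multiset.bind_add]
    have pAA : ((Finset.univ : Finset (Fin r)).val.map (Fin.castLE hrdL)).bind
        (fun a => ((Finset.univ : Finset (Fin r)).val.map (Fin.castLE hrd0)).map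
          fun b => dd (a, b))
        = Finset.univ.val.map fun p : Fin r × Fin r =>
          ∑ l ∈ Finset.Icc 1 L, lam p.1 ^ (2 * (L - l)) * lam p.2 ^ (2 * (l - 1)) := by
      rw [my_univ_prod_map, Multiset.bind_map]
      refine Multiset.bind_congr fun i _ => ?_
      rw [Multiset.map_map]
      exact Multiset.map_congr rfl fun j _ => hval_AA i j
    have pAB : ((Finset.univ : Finset (Fin r)).val.map (Fin.castLE hrdL)).bind
        (fun a => tB.map fun b => dd (a, b))
        = Finset.univ.val.bind fun i : Fin r =>
            Multiset.replicate (d0 - r) (lam i ^ (2 * (L - 1))) := by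
      rw [Multiset.bind_map]
      refine Multiset.bind_congr fun i _ => ?_
      rw [Multiset.map_congr rfl fun b hb =>
        hval_AB i b (Multiset.mem_filter.mp hb).2]
      rw [Multiset.map_const', hcard_tB]
    have pBA : sB.bind
        (fun a => ((Finset.univ : Finset (Fin r)).val.map (Fin.castLE hrd0)).map
          fun b => dd (a, b))
        = Finset.univ.val.bind fun j : Fin r =>
            Multiset.replicate (dL - r) (lam j ^ (2 * (L - 1))) := by
      have step : sB.bind (fun a => ((Finset.univ : Finset (Fin r)).val.map
          (Fin.castLE hrd0)).map fun b => dd (a, b))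
          = sB.bind (fun _ => (Finset.univ : Finset (Fin r)).val.map
              fun j => lam j ^ (2 * (L - 1))) := by
        refine Multiset.bind_congr fun a ha => ?_
        rw [Multiset.map_map]
        exact Multiset.map_congr rfl fun j _ =>
          hval_BA a j (Multiset.mem_filter.mp ha).2
      rw [step, my_bind_const, hcard_sB, my_bind_replicate]
    have pBB : sB.bind (fun a => tB.map fun b => dd (a, b))
        = Multiset.replicate ((dL - r) * (d0 - r)) (0 : ℝ) := by
      have step : sB.bind (fun a => tB.map fun b => dd (a, b))
          = sB.bind (fun _ => Multiset.replicate (d0 - r) (0 : ℝ)) := by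
        refine Multiset.bind_congr fun a ha => ?_
        rw [Multiset.map_congr rfl fun b hb =>
          hval_BB a b (Multiset.mem_filter.mp ha).2 (Multiset.mem_filter.mp hb).2]
        rw [Multiset.map_const', hcard_tB]
      rw [step, my_bind_const, hcard_sB, Multiset.nsmul_replicate]
    rw [pAA, pAB, pBA, pBB]
    rw [← add_assoc]
  have hfinal : Finset.univ.val.map hG.eigenvalues =
      (Finset.univ.val.map fun p : Fin r × Fin r =>
          ∑ l ∈ Finset.Icc 1 L, lam p.1 ^ (2 * (L - l)) * lam p.2 ^ (2 * (l - 1))) +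
        (Finset.univ.val.bind fun i : Fin r =>
          Multiset.replicate (d0 - r) (lam i ^ (2 * (L - 1)))) +
        (Finset.univ.val.bind fun j : Fin r =>
          Multiset.replicate (dL - r) (lam j ^ (2 * (L - 1)))) +
        Multiset.replicate ((dL - r) * (d0 - r)) (0 : ℝ) := hEig.trans hmain
  refine ⟨hfinal, ?_⟩
  rw [hfinal]
  rw [Multiset.filter_add, Multiset.filter_add, Multiset.filter_add]
  have hpow_ne : ∀ (i : Fin r) (m : ℕ), lam i ^ m ≠ 0 :=
    fun i m => pow_ne_zero m (ne_of_gt (hlam i))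
  have f1 : ((Finset.univ.val.map fun p : Fin r × Fin r =>
      ∑ l ∈ Finset.Icc 1 L, lam p.1 ^ (2 * (L - l)) * lam p.2 ^ (2 * (l - 1))).filter
        fun x => x ≠ 0)
      = Finset.univ.val.map fun p : Fin r × Fin r =>
          ∑ l ∈ Finset.Icc 1 L, lam p.1 ^ (2 * (L - l)) * lam p.2 ^ (2 * (l - 1)) := by
    refine Multiset.filter_eq_self.mpr fun a ha => ?_
    obtain ⟨p, -, rfl⟩ := Multiset.mem_map.mp ha
    refine ne_of_gt (Finset.sum_pos (fun l _ => ?_) ?_)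
    · exact mul_pos (pow_pos (hlam p.1) _) (pow_pos (hlam p.2) _)
    · exact Finset.nonempty_Icc.mpr (by omega)
  have f2 : ((Finset.univ.val.bind fun i : Fin r =>
      Multiset.replicate (d0 - r) (lam i ^ (2 * (L - 1)))).filter fun x => x ≠ 0)
      = Finset.univ.val.bind fun i : Fin r =>
          Multiset.replicate (d0 - r) (lam i ^ (2 * (L - 1))) := by
    refine Multiset.filter_eq_self.mpr fun a ha => ?_
    obtain ⟨i, -, hai⟩ := Multiset.mem_bind.mp ha
    rw [(Multiset.eq_of_mem_replicate hai)]
    exact hpow_ne i _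
  have f3 : ((Finset.univ.val.bind fun j : Fin r =>
      Multiset.replicate (dL - r) (lam j ^ (2 * (L - 1)))).filter fun x => x ≠ 0)
      = Finset.univ.val.bind fun j : Fin r =>
          Multiset.replicate (dL - r) (lam j ^ (2 * (L - 1))) := by
    refine Multiset.filter_eq_self.mpr fun a ha => ?_
    obtain ⟨i, -, hai⟩ := Multiset.mem_bind.mp ha
    rw [(Multiset.eq_of_mem_replicate hai)]
    exact hpow_ne i _
  have f4 : ((Multiset.replicate ((dL - r) * (d0 - r)) (0 : ℝ)).filter fun x => x ≠ 0)
      = 0 := by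
    refine Multiset.filter_eq_nil.mpr fun a ha => ?_
    rw [Multiset.eq_of_mem_replicate ha]
    simp
  rw [f1, f2, f3, f4]
  simp only [Multiset.card_add, Multiset.card_map, Multiset.card_bind, Multiset.card_zero]
  have hc2 : ((Finset.univ : Finset (Fin r)).val.map
      (Multiset.card ∘ fun i : Fin r =>
        Multiset.replicate (d0 - r) (lam i ^ (2 * (L - 1))))).sum = r * (d0 - r) := by
    have hfun : (Multiset.card ∘ fun i : Fin r =>
        Multiset.replicate (d0 - r) (lam i ^ (2 * (L - 1)))) = fun _ : Fin r => d0 - r := by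
      funext i; simp
    rw [hfun, Multiset.map_const', Multiset.sum_replicate, smul_eq_mul, Finset.card_val,
      Finset.card_univ, Fintype.card_fin]
  have hc3 : ((Finset.univ : Finset (Fin r)).val.map
      (Multiset.card ∘ fun j : Fin r =>
        Multiset.replicate (dL - r) (lam j ^ (2 * (L - 1))))).sum = r * (dL - r) := by
    have hfun : (Multiset.card ∘ fun j : Fin r =>
        Multiset.replicate (dL - r) (lam j ^ (2 * (L - 1)))) = fun _ : Fin r => dL - r := by
      funext i; simp
    rw [hfun, Multiset.map_const', Multiset.sum_replicate, smul_eq_mul, Finset.card_val,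
      Finset.card_univ, Fintype.card_fin]
  rw [hc2, hc3, Finset.card_val, Finset.card_univ, Fintype.card_prod, Fintype.card_fin]
  obtain ⟨a, ha⟩ := Nat.exists_eq_add_of_le hrd0
  obtain ⟨b, hb⟩ := Nat.exists_eq_add_of_le hrdL
  subst ha hb
  have e1 : r + a - r = a := by omega
  have e2 : r + b - r = b := by omega
  have e3 : r + a + (r + b) - r = r + a + b := by omega
  rw [e1, e2, e3]
  ring
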